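/- arXiv:1709.04278 — 2 statements merged into one kernel-verified Lean document; each statement's English description precedes it below -/
import Mathlib

section
/- For any commutative ring R and any type ι, let F = FreeGroup ι and let I_{R[F]} be the augmentation ideal of R[F]. The family indexed by ι whose i-th member is (of i) − 1 ∈ I_{R[F]}, where of i denotes the image in R[F] of the generator FreeGroup.of i, is a basis of I_{R[F]} as a left R[F]-module; in particular I_{R[F]} is a free left R[F]-module. -/
/-!
STATEMENT 1: For any commutative ring `R` and any type `ι`, let `F = FreeGroup ι` and let
`I_{R[F]}` be the augmentation ideal of `R[F]`. The family indexed by `ι` whose `i`-th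
member is `(of i) - 1 ∈ I_{R[F]}` is a basis of `I_{R[F]}` as a left `R[F]`-module; in
particular `I_{R[F]}` is a free left `R[F]`-module.
-/

/-- The augmentation `R[G] →ₐ[R] R` of the group ring `R[G] = MonoidAlgebra R G`,
sending `∑ a_g · g` to `∑ a_g`. -/
noncomputable def augmentation (R : Type*) [CommRing R] (G : Type*) [Group G] :
    MonoidAlgebra R G →ₐ[R] R :=
  MonoidAlgebra.lift R R G 1

/-- The augmentation ideal `I_{R[G]}` of the group ring, i.e. the kernel of the
augmentation, regarded as a left ideal (hence a left `R[G]`-module). -/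
noncomputable def augIdeal (R : Type*) [CommRing R] (G : Type*) [Group G] :
    Ideal (MonoidAlgebra R G) :=
  RingHom.ker (augmentation R G).toRingHom

section Fox

variable (R : Type*) [CommRing R] (ι : Type*)

local notation "F" => FreeGroup ι

/-- The units `g : Aˣ` for `g : F`. -/
noncomputable def foxU : F →* (MonoidAlgebra R (FreeGroup ι))ˣ :=
  (MonoidAlgebra.of R (FreeGroup ι)).toHomUnits

/-- The action of `F` on `Multiplicative (ι →₀ A)` by left multiplication. -/
noncomputable def foxφ : F →* MulAut (Multiplicative (ι →₀ MonoidAlgebra R (FreeGroup ι))) where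
  toFun g := AddEquiv.toMultiplicative (DistribMulAction.toAddAut _ _ (foxU R ι g))
  map_one' := by ext m; simp
  map_mul' g h := by ext m; simp [mul_smul]

/-- The tautological cocycle `F → (ι →₀ A) ⋊ F`. -/
noncomputable def foxHom : F →* Multiplicative (ι →₀ MonoidAlgebra R (FreeGroup ι)) ⋊[foxφ R ι] F :=
  FreeGroup.lift fun i =>
    ⟨Multiplicative.ofAdd (Finsupp.single i 1), FreeGroup.of i⟩

/-- The Fox derivative cocycle. -/
noncomputable def foxd (g : F) : ι →₀ MonoidAlgebra R (FreeGroup ι) :=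
  Multiplicative.toAdd (foxHom R ι g).left

variable {R ι}

lemma foxHom_right (g : F) : (foxHom R ι g).right = g := by
  have := FreeGroup.ext_hom (SemidirectProduct.rightHom.comp (foxHom R ι))
    (MonoidHom.id F) (fun i => by simp [foxHom])
  exact DFunLike.congr_fun this g

lemma foxd_one : foxd R ι (1 : F) = 0 := by
  simp [foxd]

lemma foxd_of (i : ι) : foxd R ι (FreeGroup.of i) = Finsupp.single i 1 := by
  simp [foxd, foxHom]

lemma foxd_mul (g h : F) :
    foxd R ι (g * h) = foxd R ι g + MonoidAlgebra.of R (FreeGroup ι) g • foxd R ι h := by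
  have : (foxHom R ι (g * h)).left
      = (foxHom R ι g).left * foxφ R ι (foxHom R ι g).right (foxHom R ι h).left := by
    rw [map_mul]; rfl
  have h2 := congrArg Multiplicative.toAdd this
  rw [foxHom_right] at h2
  simpa [foxd, foxφ, foxU, Units.smul_def] using h2

lemma foxd_inv (g : F) :
    foxd R ι g⁻¹ = -(MonoidAlgebra.of R (FreeGroup ι) g⁻¹ • foxd R ι g) := by
  have h := foxd_mul (R := R) g⁻¹ g
  rw [inv_mul_cancel, foxd_one] at h
  exact eq_neg_of_add_eq_zero_left h.symm

variable (R ι) in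
/-- The linearized Fox derivative `A →ₗ[R] ι →₀ A`. -/
noncomputable def foxD :
    MonoidAlgebra R (FreeGroup ι) →ₗ[R] (ι →₀ MonoidAlgebra R (FreeGroup ι)) :=
  Finsupp.linearCombination R (foxd R ι) ∘ₗ (MonoidAlgebra.coeffLinearEquiv R).toLinearMap

lemma foxD_of (g : F) : foxD R ι (MonoidAlgebra.of R (FreeGroup ι) g) = foxd R ι g := by
  simp only [foxD, MonoidAlgebra.of_apply, LinearMap.coe_comp, Function.comp_apply,
    LinearEquiv.coe_coe, MonoidAlgebra.coeffLinearEquiv_apply, MonoidAlgebra.coeff_single]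
  exact (Finsupp.linearCombination_single _ _ _).trans (one_smul _ _)

lemma aug_of (g : F) : augmentation R (FreeGroup ι) (MonoidAlgebra.of R (FreeGroup ι) g) = 1 := by
  simp [augmentation]

lemma foxD_mul (a b : MonoidAlgebra R (FreeGroup ι)) :
    foxD R ι (a * b) = augmentation R (FreeGroup ι) b • foxD R ι a + a • foxD R ι b := by
  induction a using MonoidAlgebra.induction_on with
  | of g =>
    induction b using MonoidAlgebra.induction_on with
    | of h =>
      rw [← map_mul, foxD_of, foxD_of, foxD_of, foxd_mul, aug_of, one_smul]
    | add f₁ f₂ h₁ h₂ =>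
      rw [mul_add, map_add, h₁, h₂, map_add, map_add, add_smul, smul_add]
      abel
    | smul r f hf =>
      rw [mul_smul_comm, map_smul, hf, map_smul, smul_add, smul_assoc,
        smul_comm r (MonoidAlgebra.of R (FreeGroup ι) g) (foxD R ι f), map_smul]
  | add f₁ f₂ h₁ h₂ =>
    rw [add_mul, map_add, h₁, h₂, map_add, smul_add, add_smul]
    abel
  | smul r f hf =>
    rw [smul_mul_assoc, map_smul, hf, map_smul, smul_add,
      smul_comm r (augmentation R (FreeGroup ι) b) (foxD R ι f), smul_assoc]

variable (R ι) in
/-- The map `(cᵢ) ↦ ∑ cᵢ (xᵢ - 1)`. -/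
noncomputable def foxΦ : (ι →₀ MonoidAlgebra R (FreeGroup ι)) →ₗ[MonoidAlgebra R (FreeGroup ι)]
    MonoidAlgebra R (FreeGroup ι) :=
  Finsupp.linearCombination _ (fun i => MonoidAlgebra.of R (FreeGroup ι) (FreeGroup.of i) - 1)

lemma foxΦ_single (i : ι) (a : MonoidAlgebra R (FreeGroup ι)) :
    foxΦ R ι (Finsupp.single i a)
      = a * (MonoidAlgebra.of R (FreeGroup ι) (FreeGroup.of i) - 1) := by
  rw [foxΦ, Finsupp.linearCombination_single, smul_eq_mul]

lemma foxΦ_Rsmul (r : R) (c : ι →₀ MonoidAlgebra R (FreeGroup ι)) :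
    foxΦ R ι (r • c) = r • foxΦ R ι c := by
  rw [← algebraMap_smul (MonoidAlgebra R (FreeGroup ι)) r c, map_smul, algebraMap_smul]

lemma foxΦ_foxd (g : F) : foxΦ R ι (foxd R ι g) = MonoidAlgebra.of R (FreeGroup ι) g - 1 := by
  induction g with
  | C1 => rw [foxd_one, map_zero, map_one, sub_self]
  | of i =>
    show foxΦ R ι (foxd R ι (FreeGroup.of i)) = MonoidAlgebra.of R (FreeGroup ι) (FreeGroup.of i) - 1
    rw [foxd_of, foxΦ_single, one_mul]
  | inv_of i ih =>
    have ih' : foxΦ R ι (foxd R ι (FreeGroup.of i))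
        = MonoidAlgebra.of R (FreeGroup ι) (FreeGroup.of i) - 1 := ih
    show foxΦ R ι (foxd R ι (FreeGroup.of i)⁻¹) = MonoidAlgebra.of R (FreeGroup ι) (FreeGroup.of i)⁻¹ - 1
    rw [foxd_inv, map_neg, map_smul, ih', smul_eq_mul, mul_sub, mul_one,
      ← map_mul, inv_mul_cancel (FreeGroup.of i), map_one, neg_sub]
  | mul g h ihg ihh =>
    rw [foxd_mul, map_add, map_smul, ihg, ihh, smul_eq_mul, map_mul,
      mul_sub, mul_one]
    abel

lemma foxΦ_foxD (a : MonoidAlgebra R (FreeGroup ι)) :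
    foxΦ R ι (foxD R ι a) = a - augmentation R (FreeGroup ι) a • 1 := by
  induction a using MonoidAlgebra.induction_on with
  | of g => rw [foxD_of, foxΦ_foxd, aug_of, one_smul]
  | add f₁ f₂ h₁ h₂ =>
    rw [map_add, map_add, h₁, h₂, map_add, add_smul]
    abel
  | smul r f hf =>
    rw [map_smul, foxΦ_Rsmul, hf, map_smul, smul_sub, smul_eq_mul, mul_smul]

lemma foxD_foxΦ (c : ι →₀ MonoidAlgebra R (FreeGroup ι)) :
    foxD R ι (foxΦ R ι c) = c := by
  induction c using Finsupp.induction_linear with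
  | zero => simp
  | add f g hf hg => rw [map_add, map_add, hf, hg]
  | single i a =>
    rw [foxΦ_single, foxD_mul]
    have h1 : augmentation R (FreeGroup ι)
        (MonoidAlgebra.of R (FreeGroup ι) (FreeGroup.of i) - 1) = 0 := by
      rw [map_sub, aug_of, map_one, sub_self]
    have h2 : foxD R ι (MonoidAlgebra.of R (FreeGroup ι) (FreeGroup.of i) - 1)
        = Finsupp.single i 1 := by
      rw [map_sub, foxD_of, foxd_of,
        show (1 : MonoidAlgebra R (FreeGroup ι)) = MonoidAlgebra.of R (FreeGroup ι) 1 from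
          (map_one _).symm,
        foxD_of, foxd_one, sub_zero]
    rw [h1, h2, zero_smul, zero_add, Finsupp.smul_single, smul_eq_mul, mul_one]

lemma foxΦ_mem (c : ι →₀ MonoidAlgebra R (FreeGroup ι)) :
    foxΦ R ι c ∈ augIdeal R (FreeGroup ι) := by
  rw [augIdeal, RingHom.mem_ker]
  show augmentation R (FreeGroup ι) (foxΦ R ι c) = 0
  induction c using Finsupp.induction_linear with
  | zero => rw [map_zero, map_zero]
  | add f g hf hg => rw [map_add, map_add, hf, hg, add_zero]
  | single i a =>
    rw [foxΦ_single, map_mul, map_sub, aug_of, map_one, sub_self, mul_zero]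

end Fox

theorem exists_basis_augIdeal_freeGroup (R : Type*) [CommRing R] (ι : Type*) :
    ∃ b : Module.Basis ι (MonoidAlgebra R (FreeGroup ι)) (augIdeal R (FreeGroup ι)),
      ∀ i : ι, (b i : MonoidAlgebra R (FreeGroup ι)) =
        MonoidAlgebra.of R (FreeGroup ι) (FreeGroup.of i) - 1 := by
  set A := MonoidAlgebra R (FreeGroup ι) with hA
  have mem_iff : ∀ x : A, x ∈ augIdeal R (FreeGroup ι) ↔ augmentation R (FreeGroup ι) x = 0 :=
    fun x => Iff.rfl
  let Φc : (ι →₀ A) →ₗ[A] augIdeal R (FreeGroup ι) :=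
    (foxΦ R ι).codRestrict (augIdeal R (FreeGroup ι)) foxΦ_mem
  have hΦc : ∀ c, (Φc c : A) = foxΦ R ι c := fun c => rfl
  have hbij : Function.Bijective Φc := by
    constructor
    · intro c c' h
      have := congrArg (fun x : augIdeal R (FreeGroup ι) => foxD R ι (x : A)) h
      simpa [hΦc, foxD_foxΦ] using this
    · intro x
      refine ⟨foxD R ι (x : A), Subtype.ext ?_⟩
      rw [hΦc, foxΦ_foxD, (mem_iff _).mp x.2, zero_smul, sub_zero]
  let e : (ι →₀ A) ≃ₗ[A] augIdeal R (FreeGroup ι) := LinearEquiv.ofBijective Φc hbij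
  refine ⟨Module.Basis.ofRepr e.symm, fun i => ?_⟩
  have : (Module.Basis.ofRepr e.symm) i = e (Finsupp.single i 1) := by
    simp [Module.Basis.ofRepr, Module.Basis.apply_eq_iff]
  rw [this]
  show ((Φc (Finsupp.single i 1) : augIdeal R (FreeGroup ι)) : A) = _
  rw [hΦc, foxΦ_single, one_mul]
end

section
/- Let R be a commutative ring, ι a type, H = FreeGroup ι, and M a left R[H]-module. The R-linear map from the direct sum ⊕_{i∈ι} M (finitely supported functions ι →₀ M) to I_{R[H]} ⊗_{R[H]} M which sends the element concentrated at index i with value m to the class of ((of i) − 1) ⊗ₜ m is an isomorphism of R-modules; in particular I_{R[H]} ⊗_{R[H]} M is isomorphic to a direct sum of copies of M indexed by ι. -/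
/-!
STATEMENT 2: Let `R` be a commutative ring, `ι` a type, `H = FreeGroup ι`, and `M` a left
`R[H]`-module. The `R`-linear map `(ι →₀ M) → I_{R[H]} ⊗_{R[H]} M` sending the element
concentrated at index `i` with value `m` to the class of `((of i) - 1) ⊗ₜ m` is an
isomorphism of `R`-modules.
-/

open scoped TensorProduct

theorem mul_of_mem_augIdeal {R : Type*} [CommRing R] {G : Type*} [Group G]
    (x : augIdeal R G) (g : G) :
    (x : MonoidAlgebra R G) * MonoidAlgebra.of R G g ∈ augIdeal R G := by
  have hx : augmentation R G (x : MonoidAlgebra R G) = 0 := x.2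
  simp [augIdeal, RingHom.mem_ker, map_mul, hx]

theorem of_sub_one_mem_augIdeal (R : Type*) [CommRing R] {G : Type*} [Group G] (g : G) :
    MonoidAlgebra.of R G g - 1 ∈ augIdeal R G := by
  simp [augIdeal, RingHom.mem_ker, map_sub, augmentation]

section AugTensor

variable (R : Type*) [CommRing R] (H : Type*) [Group H]
variable (M : Type*) [AddCommGroup M] [Module R M]
  [Module (MonoidAlgebra R H) M] [IsScalarTower R (MonoidAlgebra R H) M]

noncomputable local instance : AddCommGroup ((augIdeal R H) ⊗[R] M) :=
  @TensorProduct.addCommGroup R _ (augIdeal R H) M _ _ _ _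

/-- The `R`-submodule of relations defining `I_{R[H]} ⊗_{R[H]} M` as a quotient of
`I_{R[H]} ⊗[R] M`: it is generated by the elements `(x * h) ⊗ₜ m - x ⊗ₜ (h • m)`. -/
noncomputable def augTensorRel : Submodule R ((augIdeal R H) ⊗[R] M) :=
  Submodule.span R
    {z | ∃ (x : augIdeal R H) (h : H) (m : M),
      z = (⟨(x : MonoidAlgebra R H) * MonoidAlgebra.of R H h,
            mul_of_mem_augIdeal x h⟩ : augIdeal R H) ⊗ₜ[R] m
          - x ⊗ₜ[R] ((MonoidAlgebra.of R H h) • m)}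

/-- The tensor product `I_{R[H]} ⊗_{R[H]} M` of the augmentation ideal with a left
`R[H]`-module `M`. -/
noncomputable def augTensor : Type _ :=
  ((augIdeal R H) ⊗[R] M) ⧸ augTensorRel R H M

noncomputable instance : AddCommGroup (augTensor R H M) :=
  inferInstanceAs (AddCommGroup (((augIdeal R H) ⊗[R] M) ⧸ augTensorRel R H M))

noncomputable instance : Module R (augTensor R H M) :=
  inferInstanceAs (Module R (((augIdeal R H) ⊗[R] M) ⧸ augTensorRel R H M))

/-- The class of `x ⊗ₜ m` in `I_{R[H]} ⊗_{R[H]} M`. -/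
noncomputable def augTensorMk (x : augIdeal R H) (m : M) : augTensor R H M :=
  Submodule.Quotient.mk (x ⊗ₜ[R] m)

end AugTensor

namespace Fox

variable (R : Type*) [CommRing R] (ι : Type*)

local notation "F" => FreeGroup ι
local notation "A" => MonoidAlgebra R (FreeGroup ι)

noncomputable def rmul (h : F) : (ι →₀ A) →ₗ[R] (ι →₀ A) :=
  Finsupp.mapRange.linearMap (LinearMap.mulRight R (MonoidAlgebra.of R F h))

variable {ι}

lemma rmul_apply (h : F) (f : ι →₀ A) (i : ι) :
    rmul R ι h f i = f i * MonoidAlgebra.of R F h := by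
  simp [rmul]

lemma rmul_single (h : F) (i : ι) (c : A) :
    rmul R ι h (Finsupp.single i c) = Finsupp.single i (c * MonoidAlgebra.of R F h) := by
  simp [rmul]

lemma rmul_rmul (a b : F) (f : ι →₀ A) :
    rmul R ι b (rmul R ι a f) = rmul R ι (a * b) f := by
  ext i
  simp [rmul_apply, map_mul, mul_assoc]

lemma rmul_one (f : ι →₀ A) : rmul R ι 1 f = f := by
  ext i
  simp [rmul_apply]

variable (ι)

structure Aux where
  g : F
  f : ι →₀ A

noncomputable instance : Mul (Aux R ι) := ⟨fun x y => ⟨x.g * y.g, rmul R ι y.g x.f + y.f⟩⟩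
noncomputable instance : One (Aux R ι) := ⟨⟨1, 0⟩⟩
noncomputable instance : Inv (Aux R ι) := ⟨fun x => ⟨x.g⁻¹, -(rmul R ι x.g⁻¹ x.f)⟩⟩

lemma aux_mul_g (x y : Aux R ι) : (x * y).g = x.g * y.g := rfl
lemma aux_mul_f (x y : Aux R ι) : (x * y).f = rmul R ι y.g x.f + y.f := rfl
lemma aux_one_g : (1 : Aux R ι).g = 1 := rfl
lemma aux_one_f : (1 : Aux R ι).f = 0 := rfl
lemma aux_inv_g (x : Aux R ι) : (x⁻¹).g = x.g⁻¹ := rfl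
lemma aux_inv_f (x : Aux R ι) : (x⁻¹).f = -(rmul R ι x.g⁻¹ x.f) := rfl

lemma aux_ext {x y : Aux R ι} (h1 : x.g = y.g) (h2 : x.f = y.f) : x = y := by
  cases x; cases y; cases h1; cases h2; rfl

noncomputable instance : Group (Aux R ι) where
  mul_assoc x y z := aux_ext R ι (by simp [aux_mul_g, mul_assoc])
    (by simp [aux_mul_f, aux_mul_g, map_add, rmul_rmul, add_assoc])
  one_mul x := aux_ext R ι (by simp [aux_mul_g, aux_one_g])
    (by simp [aux_mul_f, aux_one_f, map_zero])
  mul_one x := aux_ext R ι (by simp [aux_mul_g, aux_one_g])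
    (by simp [aux_mul_f, aux_one_f, aux_one_g, rmul_one])
  inv_mul_cancel x := aux_ext R ι (by simp [aux_mul_g, aux_inv_g, aux_one_g])
    (by simp [aux_mul_f, aux_inv_f, aux_inv_g, aux_one_f, map_neg, rmul_rmul, rmul_one])

noncomputable def e : F →* Aux R ι :=
  FreeGroup.lift fun i => ⟨FreeGroup.of i, Finsupp.single i 1⟩

noncomputable def gHom : Aux R ι →* F where
  toFun := Aux.g
  map_one' := rfl
  map_mul' _ _ := rfl

lemma e_g (x : F) : (e R ι x).g = x := by
  have : (gHom R ι).comp (e R ι) = MonoidHom.id F := by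
    apply FreeGroup.ext_hom
    intro i
    simp [gHom, e]
  exact congrArg (fun φ => φ x) this

variable {ι}

noncomputable def d (x : F) : ι →₀ A := (e R ι x).f

lemma d_one : d R (1 : F) = 0 := by
  unfold d
  rw [map_one]
  rfl

lemma d_mul (x y : F) : d R (x * y) = rmul R ι y (d R x) + d R y := by
  unfold d
  rw [map_mul, aux_mul_f, e_g]

lemma d_of (i : ι) : d R (FreeGroup.of i) = Finsupp.single i 1 := by
  unfold d e
  rw [FreeGroup.lift_apply_of]

lemma d_inv (x : F) : d R (x⁻¹ : F) = -(rmul R ι x⁻¹ (d R x)) := by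
  unfold d
  rw [map_inv, aux_inv_f, e_g]


noncomputable def S : (ι →₀ A) →ₗ[R] A :=
  Finsupp.lsum R fun i =>
    LinearMap.mulLeft R (MonoidAlgebra.of R F (FreeGroup.of i) - 1)

lemma S_single (i : ι) (c : A) :
    S R (Finsupp.single i c) = (MonoidAlgebra.of R F (FreeGroup.of i) - 1) * c := by
  simp [S]

lemma S_rmul (h : F) (f : ι →₀ A) :
    S R (rmul R ι h f) = S R f * MonoidAlgebra.of R F h := by
  induction f using Finsupp.induction_linear with
  | zero => simp
  | add a b ha hb => simp [map_add, ha, hb, add_mul]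
  | single i c => rw [rmul_single, S_single, S_single, mul_assoc]

lemma S_d (x : F) : S R (d R x) = MonoidAlgebra.of R F x - 1 := by
  induction x using FreeGroup.induction_on with
  | C1 => rw [d_one, map_zero, map_one, sub_self]
  | of i =>
      rw [d_of, S_single, mul_one]
  | inv_of i ih =>
      rw [d_inv, map_neg, S_rmul, ih, sub_mul, ← map_mul, mul_inv_cancel,
        map_one, one_mul, neg_sub]
  | mul x y ihx ihy =>
      rw [d_mul, map_add, S_rmul, ihx, ihy, map_mul, sub_mul, one_mul]
      abel

noncomputable def D : A →ₗ[R] (ι →₀ A) :=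
  (Finsupp.lsum R fun g => LinearMap.toSpanSingleton R _ (d R g)) ∘ₗ
    (MonoidAlgebra.coeffLinearEquiv R).toLinearMap

lemma D_single (g : F) (r : R) : D R (MonoidAlgebra.single g r) = r • d R g := by
  unfold D
  rw [LinearMap.comp_apply]
  erw [Finsupp.lsum_single]
  rw [LinearMap.toSpanSingleton_apply]

lemma aug_single (g : F) (r : R) :
    augmentation R F (MonoidAlgebra.single g r) = r := by
  have : (MonoidAlgebra.single g r : A) = MonoidAlgebra.single g r := rfl
  rw [this, augmentation, MonoidAlgebra.lift_single]
  simp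

lemma S_D (x : A) : S R (D R x) = x - augmentation R F x • 1 := by
  induction x using MonoidAlgebra.induction_linear with
  | zero => simp
  | add a b ha hb =>
      rw [map_add, map_add, ha, hb, map_add, add_smul, sub_add_sub_comm]
  | single g r =>
      rw [D_single, map_smul, S_d, aug_single, smul_sub]
      have : r • MonoidAlgebra.of R F g = MonoidAlgebra.single g r := by
        rw [MonoidAlgebra.of_apply, MonoidAlgebra.smul_single, smul_eq_mul, mul_one]
      rw [this]

lemma aug_of (g : F) : augmentation R F (MonoidAlgebra.of R F g) = 1 := by
  rw [augmentation, MonoidAlgebra.lift_of]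
  rfl

lemma single_eq_smul_of (g : F) (r : R) :
    (MonoidAlgebra.single g r : A) = r • MonoidAlgebra.of R F g := by
  rw [show MonoidAlgebra.of R F g = MonoidAlgebra.single g (1 : R) from rfl, MonoidAlgebra.smul_single,
    smul_eq_mul, mul_one]

lemma D_of (x : F) : D R (MonoidAlgebra.of R F x) = d R x := by
  rw [show MonoidAlgebra.of R F x = MonoidAlgebra.single x (1 : R) from rfl, D_single, one_smul]

lemma smul_mul_A (r : R) (a b : A) : (r • a) * b = r • (a * b) :=
  smul_mul_assoc r a b

lemma D_mul_of (x : A) (h : F) :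
    D R (x * MonoidAlgebra.of R F h) =
      rmul R ι h (D R x) + augmentation R F x • d R h := by
  have key : (D R (ι := ι)) ∘ₗ LinearMap.mulRight R (MonoidAlgebra.of R F h)
      = (rmul R ι h) ∘ₗ D R
        + LinearMap.toSpanSingleton R _ (d R h) ∘ₗ (augmentation R F).toLinearMap := by
    apply MonoidAlgebra.lhom_ext'
    intro g
    apply LinearMap.ext
    intro r
    have hs : (MonoidAlgebra.single g r : A) = r • MonoidAlgebra.of R F g :=
      single_eq_smul_of R g r
    show D R (MonoidAlgebra.single g r * MonoidAlgebra.of R F h)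
        = rmul R ι h (D R (MonoidAlgebra.single g r))
          + augmentation R F (MonoidAlgebra.single g r) • d R h
    rw [hs, smul_mul_A, map_smul, map_smul, map_smul, map_smul, aug_of,
      smul_eq_mul, mul_one, ← map_mul (MonoidAlgebra.of R F) g h, D_of, D_of, d_mul, smul_add]
  have := LinearMap.congr_fun key x
  simpa using this



end Fox

namespace Fox

variable (R : Type*) [CommRing R] {ι : Type*}
variable (M : Type*) [AddCommGroup M] [Module R M]
  [Module (MonoidAlgebra R (FreeGroup ι)) M]
  [IsScalarTower R (MonoidAlgebra R (FreeGroup ι)) M]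

local notation "F" => FreeGroup ι
local notation "A" => MonoidAlgebra R (FreeGroup ι)

noncomputable local instance : AddCommGroup ((augIdeal R F) ⊗[R] M) :=
  @TensorProduct.addCommGroup R _ (augIdeal R F) M _ _ _ _

/-- Scalar multiplication as an `R`-bilinear map. -/
noncomputable def lsmulM : A →ₗ[R] M →ₗ[R] M where
  toFun c :=
    { toFun := fun m => c • m
      map_add' := fun a b => smul_add c a b
      map_smul' := fun r m => (smul_comm c r m) }
  map_add' a b := LinearMap.ext fun m => add_smul a b m
  map_smul' r a := LinearMap.ext fun m => smul_assoc r a m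

lemma lsmulM_apply (c : A) (m : M) : lsmulM R M c m = c • m := rfl

/-- `T f m = ∑ i, single i (f i • m)`. -/
noncomputable def T : (ι →₀ A) →ₗ[R] M →ₗ[R] (ι →₀ M) :=
  Finsupp.lsum R fun i =>
    (LinearMap.llcomp R M M (ι →₀ M) (Finsupp.lsingle i)) ∘ₗ lsmulM R M

lemma T_single (i : ι) (c : A) (m : M) :
    T R M (Finsupp.single i c) m = Finsupp.single i (c • m) := by
  unfold T
  erw [Finsupp.lsum_single]
  rfl

lemma T_rmul (h : F) (f : ι →₀ A) (m : M) :
    T R M (rmul R ι h f) m = T R M f (MonoidAlgebra.of R F h • m) := by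
  induction f using Finsupp.induction_linear with
  | zero => simp
  | add a b ha hb =>
      rw [map_add, map_add]
      simp only [LinearMap.add_apply]
      rw [ha, hb]
      rw [map_add]
      simp only [LinearMap.add_apply]
  | single i c => rw [rmul_single, T_single, T_single, mul_smul]


lemma aug_coe (x : augIdeal R F) : augmentation R F (x : A) = 0 := x.2

/-- The map `I ⊗ M → (ι →₀ M)` before passing to the quotient. -/
noncomputable def psi0 : ((augIdeal R F) ⊗[R] M) →ₗ[R] (ι →₀ M) :=
  TensorProduct.lift ((T R M ∘ₗ D R) ∘ₗ ((augIdeal R F).subtype.restrictScalars R))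

lemma psi0_tmul (x : augIdeal R F) (m : M) :
    psi0 R M (x ⊗ₜ[R] m) = T R M (D R (x : A)) m := rfl

lemma psi0_rel : augTensorRel R F M ≤ LinearMap.ker (psi0 R M) := by
  rw [augTensorRel, Submodule.span_le]
  rintro z ⟨x, h, m, rfl⟩
  simp only [SetLike.mem_coe, LinearMap.mem_ker, map_sub]
  rw [psi0_tmul, psi0_tmul]
  have hD : D R ((x : A) * MonoidAlgebra.of R F h) = rmul R ι h (D R (x : A)) := by
    rw [D_mul_of, aug_coe, zero_smul, add_zero]
  erw [hD]
  rw [T_rmul, sub_self]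

/-- The induced map on the quotient. -/
noncomputable def psi : augTensor R F M →ₗ[R] (ι →₀ M) :=
  Submodule.liftQ _ (psi0 R M) (psi0_rel R M)

/-- The forward map `(ι →₀ M) → augTensor`. -/
noncomputable def phi : (ι →₀ M) →ₗ[R] augTensor R F M :=
  Finsupp.lsum R fun i =>
    (augTensorRel R F M).mkQ ∘ₗ
      (TensorProduct.mk R (augIdeal R F) M
        ⟨MonoidAlgebra.of R F (FreeGroup.of i) - 1, of_sub_one_mem_augIdeal R (FreeGroup.of i)⟩)

lemma phi_single (i : ι) (m : M) :
    phi R M (Finsupp.single i m) =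
      Submodule.Quotient.mk
        ((⟨MonoidAlgebra.of R F (FreeGroup.of i) - 1,
            of_sub_one_mem_augIdeal R (FreeGroup.of i)⟩ : augIdeal R F) ⊗ₜ[R] m) := by
  unfold phi
  erw [Finsupp.lsum_single]
  rfl

/-- Right multiplication `c ↦ y * c` as a map into the augmentation ideal. -/
noncomputable def mulY (y : augIdeal R F) : A →ₗ[R] augIdeal R F where
  toFun c := ⟨(y : A) * c, by
    have : augmentation R F ((y : A) * c) = 0 := by
      rw [map_mul, aug_coe, zero_mul]
    exact this⟩
  map_add' a b := Subtype.ext (by simp [mul_add])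
  map_smul' r a := Subtype.ext (by simp [Algebra.mul_smul_comm])

lemma mulY_apply (y : augIdeal R F) (c : A) : ((mulY R y c : augIdeal R F) : A) = (y : A) * c := rfl

/-- `y ⊗ₜ m` as linear in `y`, composed with the quotient map. -/
noncomputable def Lmap (m : M) : augIdeal R F →ₗ[R] augTensor R F M :=
  (augTensorRel R F M).mkQ ∘ₗ ((TensorProduct.mk R (augIdeal R F) M).flip m)

lemma Lmap_apply (m : M) (y : augIdeal R F) :
    Lmap R M m y = Submodule.Quotient.mk (y ⊗ₜ[R] m) := rfl

lemma key_rel (y : augIdeal R F) (c : A) (m : M) :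
    (Submodule.Quotient.mk (mulY R y c ⊗ₜ[R] m) : augTensor R F M)
      = Submodule.Quotient.mk (y ⊗ₜ[R] (c • m)) := by
  induction c using MonoidAlgebra.induction_linear with
  | zero =>
      have h1 : mulY R y (0 : A) = 0 := map_zero _
      rw [h1, TensorProduct.zero_tmul, zero_smul, TensorProduct.tmul_zero]
  | add a b ha hb =>
      have h1 : mulY R y (a + b) = mulY R y a + mulY R y b := map_add _ _ _
      rw [h1, TensorProduct.add_tmul, add_smul, TensorProduct.tmul_add]
      rw [Submodule.Quotient.mk_add, Submodule.Quotient.mk_add, ha, hb]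
  | single h r =>
      have h1 : (MonoidAlgebra.single h r : A) = r • MonoidAlgebra.of R F h :=
        single_eq_smul_of R h r
      rw [h1]
      have h2 : mulY R y (r • MonoidAlgebra.of R F h) = r • mulY R y (MonoidAlgebra.of R F h) :=
        map_smul _ _ _
      have base : (Submodule.Quotient.mk ((mulY R y) (MonoidAlgebra.of R F h) ⊗ₜ[R] m)
          : augTensor R F M) = Submodule.Quotient.mk (y ⊗ₜ[R] (MonoidAlgebra.of R F h • m)) := by
        rw [Submodule.Quotient.eq]
        exact Submodule.subset_span ⟨y, h, m, rfl⟩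
      rw [h2, ← TensorProduct.smul_tmul', Submodule.Quotient.mk_smul, smul_assoc,
        TensorProduct.tmul_smul, Submodule.Quotient.mk_smul, base]


/-- `S` corestricted to the augmentation ideal. -/
noncomputable def S' : (ι →₀ MonoidAlgebra R (FreeGroup ι)) →ₗ[R] augIdeal R F where
  toFun f := ⟨S R f, by
    have hz : augmentation R F (S R f) = 0 := by
      induction f using Finsupp.induction_linear with
      | zero => simp
      | add a b ha hb => rw [map_add, map_add, ha, hb, add_zero]
      | single i c => rw [S_single, map_mul, map_sub, aug_of, map_one, sub_self, zero_mul]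
    exact hz⟩
  map_add' a b := Subtype.ext (map_add (S R) a b)
  map_smul' r a := Subtype.ext (map_smul (S R) r a)

lemma coe_S' (f : ι →₀ MonoidAlgebra R (FreeGroup ι)) : ((S' R f : augIdeal R F) : A) = S R f :=
  rfl

lemma S'_D (x : augIdeal R F) : S' R (D R (x : A)) = x := by
  apply Subtype.ext
  rw [coe_S', S_D, aug_coe, zero_smul, sub_zero]

lemma phi_T (f : ι →₀ MonoidAlgebra R (FreeGroup ι)) (m : M) :
    phi R M (T R M f m) = Lmap R M m (S' R f) := by
  induction f using Finsupp.induction_linear with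
  | zero => simp
  | add a b ha hb =>
      rw [map_add, map_add]
      simp only [LinearMap.add_apply]
      rw [map_add, ha, hb, map_add]
  | single i c =>
      rw [T_single, phi_single, Lmap_apply]
      have hS : S' R (Finsupp.single i c)
          = mulY R ⟨MonoidAlgebra.of R F (FreeGroup.of i) - 1,
              of_sub_one_mem_augIdeal R (FreeGroup.of i)⟩ c := by
        apply Subtype.ext
        rw [coe_S', S_single, mulY_apply]
      rw [hS, key_rel]

lemma phi_psi0 (z : (augIdeal R F) ⊗[R] M) :
    phi R M (psi0 R M z) = Submodule.Quotient.mk z := by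
  have : (phi R M ∘ₗ psi0 R M) = (augTensorRel R F M).mkQ := by
    apply TensorProduct.ext'
    intro x m
    show phi R M (psi0 R M (x ⊗ₜ[R] m)) = Submodule.Quotient.mk (x ⊗ₜ[R] m)
    rw [psi0_tmul, phi_T, S'_D, Lmap_apply]
  exact LinearMap.congr_fun this z

lemma psi_phi_single (i : ι) (m : M) : psi R M (phi R M (Finsupp.single i m)) = Finsupp.single i m := by
  rw [phi_single]
  have h0 : ∀ z : (augIdeal R F) ⊗[R] M, psi R M (Submodule.Quotient.mk z) = psi0 R M z :=
    fun z => rfl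
  rw [h0, psi0_tmul]
  have hD : D R ((⟨MonoidAlgebra.of R F (FreeGroup.of i) - 1,
      of_sub_one_mem_augIdeal R (FreeGroup.of i)⟩ : augIdeal R F) : A)
      = Finsupp.single i (1 : A) := by
    show D R (MonoidAlgebra.of R F (FreeGroup.of i) - 1) = _
    rw [map_sub, D_of, d_of, show (1 : A) = MonoidAlgebra.single (1 : F) (1 : R) from rfl, D_single,
      d_one, smul_zero, sub_zero]
  rw [hD, T_single, one_smul]

noncomputable def equiv : (ι →₀ M) ≃ₗ[R] augTensor R F M :=
  LinearEquiv.ofLinear (phi R M) (psi R M)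
    (by
      apply Submodule.linearMap_qext
      apply TensorProduct.ext'
      intro x m
      show phi R M (psi R M (Submodule.Quotient.mk (x ⊗ₜ[R] m)))
        = Submodule.Quotient.mk (x ⊗ₜ[R] m)
      have : psi R M (Submodule.Quotient.mk (x ⊗ₜ[R] m)) = psi0 R M (x ⊗ₜ[R] m) := rfl
      rw [this, phi_psi0])
    (by
      apply Finsupp.lhom_ext
      intro i m
      exact psi_phi_single R M i m)

end Fox


theorem exists_linearEquiv_finsupp_augTensor_freeGroup
    (R : Type*) [CommRing R] (ι : Type*)
    (M : Type*) [AddCommGroup M] [Module R M]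
    [Module (MonoidAlgebra R (FreeGroup ι)) M]
    [IsScalarTower R (MonoidAlgebra R (FreeGroup ι)) M] :
    ∃ e : (ι →₀ M) ≃ₗ[R] augTensor R (FreeGroup ι) M,
      ∀ (i : ι) (m : M),
        e (Finsupp.single i m) =
          augTensorMk R (FreeGroup ι) M
            ⟨MonoidAlgebra.of R (FreeGroup ι) (FreeGroup.of i) - 1,
              of_sub_one_mem_augIdeal R (FreeGroup.of i)⟩ m := by
  refine ⟨Fox.equiv R M, fun i m => ?_⟩
  show Fox.phi R M (Finsupp.single i m) = _
  rw [Fox.phi_single]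
  rfl
end
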